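/- Let 0 < c₀ < 1/2 and let u₀ : ℝ → (0,∞) be a solution of u' = (u² − u⁴ − c₀²)/(√2·√(u⁴ + c₀²)) with u₀(0) = √c₀. Then u₀(x)·u₀(−x) = c₀ for all x ∈ ℝ. -/

import Mathlib

open Set Real

theorem stmt_8 (c₀ : ℝ) (hc : 0 < c₀) (hc' : c₀ < 1 / 2)
    (u₀ : ℝ → ℝ) (hpos : ∀ x, 0 < u₀ x)
    (hode : ∀ x, HasDerivAt u₀
      (((u₀ x) ^ 2 - (u₀ x) ^ 4 - c₀ ^ 2) /
        (Real.sqrt 2 * Real.sqrt ((u₀ x) ^ 4 + c₀ ^ 2))) x)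
    (h0 : u₀ 0 = Real.sqrt c₀) :
    ∀ x, u₀ x * u₀ (-x) = c₀ := by
  set F : ℝ → ℝ := fun u => (u ^ 2 - u ^ 4 - c₀ ^ 2) / (Real.sqrt 2 * Real.sqrt (u ^ 4 + c₀ ^ 2))
    with hF
  set vv : ℝ → ℝ := fun t => c₀ / u₀ (-t) with hvv
  have hw4 : ∀ w : ℝ, 0 < w ^ 4 + c₀ ^ 2 := fun w => by positivity
  have hvpos : ∀ t, 0 < vv t := fun t => div_pos hc (hpos _)
  -- key algebraic identity
  have hkey : ∀ w : ℝ, 0 < w → F (c₀ / w) = c₀ * F w / w ^ 2 := by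
    intro w hw
    have hwne : w ≠ 0 := hw.ne'
    have hsq : Real.sqrt ((c₀ / w) ^ 4 + c₀ ^ 2)
        = (c₀ / w ^ 2) * Real.sqrt (w ^ 4 + c₀ ^ 2) := by
      have h1 : (c₀ / w) ^ 4 + c₀ ^ 2 = (c₀ / w ^ 2) ^ 2 * (w ^ 4 + c₀ ^ 2) := by
        field_simp; ring
      rw [h1, Real.sqrt_mul (sq_nonneg _), Real.sqrt_sq (by positivity)]
    have hsp : Real.sqrt (w ^ 4 + c₀ ^ 2) ≠ 0 := (Real.sqrt_pos.mpr (hw4 w)).ne'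
    have hs2 : Real.sqrt 2 ≠ 0 := (Real.sqrt_pos.mpr (by norm_num)).ne'
    simp only [hF, hsq]
    field_simp
    ring
  -- vv solves the same ODE
  have hvode : ∀ t, HasDerivAt vv (F (vv t)) t := by
    intro t
    have h1 : HasDerivAt (fun s : ℝ => u₀ (-s)) (F (u₀ (-t)) * (-1)) t :=
      (hode (-t)).comp t (hasDerivAt_neg t)
    have h2 := (hasDerivAt_const t c₀).div h1 (hpos (-t)).ne'
    have heq : F (vv t) = (0 * u₀ (-t) - c₀ * (F (u₀ (-t)) * -1)) / u₀ (-t) ^ 2 := by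
      have := hkey (u₀ (-t)) (hpos (-t))
      simp only [hvv]
      rw [this]; ring
    rw [heq]
    exact h2
  -- F is C¹
  have hFcd : ContDiff ℝ 1 F := by
    rw [contDiff_iff_contDiffAt]
    intro u
    have h1 : ContDiffAt ℝ 1 (fun u : ℝ => u ^ 2 - u ^ 4 - c₀ ^ 2) u := by
      exact (((contDiff_id.pow 2).sub (contDiff_id.pow 4)).sub contDiff_const).contDiffAt
    have h2 : ContDiffAt ℝ 1 (fun u : ℝ => Real.sqrt 2 * Real.sqrt (u ^ 4 + c₀ ^ 2)) u := by
      apply ContDiffAt.mul contDiffAt_const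
      exact (Real.contDiffAt_sqrt (hw4 u).ne').comp u
        (((contDiff_id.pow 4).add contDiff_const).contDiffAt)
    exact h1.div h2 (by positivity)
  have hu₀c : Continuous u₀ := by
    rw [continuous_iff_continuousAt]; exact fun t => (hode t).continuousAt
  have hvvc : Continuous vv := by
    rw [continuous_iff_continuousAt]; exact fun t => (hvode t).continuousAt
  have hv0 : vv 0 = Real.sqrt c₀ := by
    simp only [hvv, neg_zero, h0]
    rw [eq_comm, eq_div_iff (Real.sqrt_pos.mpr hc).ne', Real.mul_self_sqrt hc.le]
  intro x
  -- set up the compact interval and bounds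
  set T : ℝ := |x| + 1 with hT
  have hxT : x ∈ Ioo (-T) T := by
    constructor <;> [nlinarith [abs_nonneg x, neg_abs_le x]; nlinarith [le_abs_self x]]
  have h0T : (0 : ℝ) ∈ Ioo (-T) T := by
    constructor <;> nlinarith [abs_nonneg x]
  have hne : (Icc (-T) T).Nonempty := nonempty_Icc.mpr (by nlinarith [abs_nonneg x])
  obtain ⟨t₁, ht₁, hmin⟩ := isCompact_Icc.exists_isMinOn hne (hu₀c.min hvvc).continuousOn
  obtain ⟨t₂, ht₂, hmax⟩ := isCompact_Icc.exists_isMaxOn hne (hu₀c.max hvvc).continuousOn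
  set m : ℝ := min (u₀ t₁) (vv t₁) with hm
  set M : ℝ := max (u₀ t₂) (vv t₂) with hM
  have hmem_u : ∀ t ∈ Ioo (-T) T, u₀ t ∈ Icc m M := by
    intro t ht
    have ht' : t ∈ Icc (-T) T := Ioo_subset_Icc_self ht
    exact ⟨le_trans (isMinOn_iff.mp hmin t ht') (min_le_left _ _),
      le_trans (le_max_left _ _) (isMaxOn_iff.mp hmax t ht')⟩
  have hmem_v : ∀ t ∈ Ioo (-T) T, vv t ∈ Icc m M := by
    intro t ht
    have ht' : t ∈ Icc (-T) T := Ioo_subset_Icc_self ht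
    exact ⟨le_trans (isMinOn_iff.mp hmin t ht') (min_le_right _ _),
      le_trans (le_max_right _ _) (isMaxOn_iff.mp hmax t ht')⟩
  -- Lipschitz bound
  have hderivc : Continuous (deriv F) := hFcd.continuous_deriv le_rfl
  obtain ⟨C, hC⟩ := isCompact_Icc.exists_bound_of_continuousOn
    (s := Icc m M) hderivc.continuousOn
  have hlip : LipschitzOnWith C.toNNReal F (Icc m M) := by
    apply (convex_Icc m M).lipschitzOnWith_of_nnnorm_deriv_le
      (fun u _ => (hFcd.differentiable one_ne_zero).differentiableAt)
    intro u hu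
    rw [← norm_toNNReal]
    exact Real.toNNReal_mono (hC u hu)
  -- uniqueness
  have heqon : EqOn u₀ vv (Icc (-T) T) := by
    apply ODE_solution_unique_of_mem_Icc (v := fun _ : ℝ => F)
      (s := fun _ : ℝ => Icc m M) (fun _ _ => hlip) h0T
      hu₀c.continuousOn (fun t _ => hode t) hmem_u
      hvvc.continuousOn (fun t _ => hvode t) hmem_v
    rw [h0, hv0]
  have hx := heqon (Ioo_subset_Icc_self hxT)
  have : u₀ x = c₀ / u₀ (-x) := hx
  rw [this]
  rw [div_mul_eq_mul_div]
  rw [mul_div_assoc, div_self (hpos (-x)).ne', mul_one]
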